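/- arXiv:0804.1748 — 3 statements merged into one kernel-verified Lean document; each statement's English description precedes it below -/
import Mathlib

section
/- Fix P > 0 and define, for B > 0, the penalty D(B) = (B/β)·∫∫ log(1 + (βP/B)·C(ν,τ)) dτ dν, where β ≥ 1 and C is nonnegative integrable with ∫∫ C = 1 and ∫∫ C² = σ < ∞. Then D(B) admits the asymptotic expansion D(B) = P − (βP²σ)/(2B) + o(1/B) as B → ∞. -/
open MeasureTheory Filter

lemma abs_f_le_sq (x : ℝ) (hx : 0 ≤ x) : |Real.log (1+x) - x + x^2/2| ≤ x^2/2 := by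
  have h1 : (0:ℝ) < 1 + x := by linarith
  have hub : Real.log (1+x) ≤ x := by
    have := Real.log_le_sub_one_of_pos h1; linarith
  have hlb : x / (1+x) ≤ Real.log (1+x) := by
    have h2 : (0:ℝ) < (1+x)⁻¹ := by positivity
    have h3 := Real.log_le_sub_one_of_pos h2
    rw [Real.log_inv] at h3
    have hx' : (1+x)⁻¹ - 1 = -(x/(1+x)) := by field_simp; ring
    linarith [h3, hx'.le]
  have hq : x^2/(1+x) ≤ x^2 := by
    rw [div_le_iff₀ h1]; nlinarith
  have hx2 : x/(1+x) - x = -(x^2/(1+x)) := by field_simp; ring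
  rw [abs_le]; constructor <;> nlinarith

lemma abs_f_le_cubic (x : ℝ) (hx : 0 ≤ x) (hx1 : x < 1) :
    |Real.log (1+x) - x + x^2/2| ≤ x^3/(1-x) := by
  have habs : |(-x)| < 1 := by rw [abs_neg, abs_of_nonneg hx]; exact hx1
  have h := Real.abs_log_sub_add_sum_range_le habs 2
  simp [Finset.sum_range_succ, abs_of_nonneg hx, sub_neg_eq_add] at h
  rw [show Real.log (1+x) - x + x^2/2 = -x + (-x)^2/2 + Real.log (1+x) by ring]
  convert h using 2 <;> ring_nf

/-- Asymptotic expansion of the penalty term: for `P > 0`, `β ≥ 1`, and a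
nonnegative integrable `C` with `∫∫ C = 1` and `∫∫ C² = σ < ∞`, the function
`D(B) = (B/β) ∫∫ log(1 + (βP/B) C)` satisfies
`D(B) = P - βP²σ/(2B) + o(1/B)` as `B → ∞`. -/
theorem stmt_9 (P β σ : ℝ) (C : ℝ × ℝ → ℝ) (hP : 0 < P) (hβ : 1 ≤ β)
    (hC0 : ∀ p, 0 ≤ C p)
    (hCint : Integrable C)
    (hmass : ∫ p : ℝ × ℝ, C p = 1)
    (hC2int : Integrable (fun p => C p ^ 2))
    (hσ : σ = ∫ p : ℝ × ℝ, C p ^ 2)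
    (D : ℝ → ℝ)
    (hD : ∀ B : ℝ, 0 < B →
      D B = (B / β) * ∫ p : ℝ × ℝ, Real.log (1 + (β * P / B) * C p)) :
    ∃ r : ℝ → ℝ,
      (∀ B : ℝ, 0 < B → D B = P - β * P ^ 2 * σ / (2 * B) + r B) ∧
      Tendsto (fun B => B * r B) atTop (nhds 0) := by
  have hβ0 : (0:ℝ) < β := lt_of_lt_of_le one_pos hβ
  refine ⟨fun B => D B - (P - β * P ^ 2 * σ / (2 * B)), fun B hB => by ring, ?_⟩
  -- the normalized integrand
  set F : ℝ → ℝ × ℝ → ℝ := fun B p =>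
    (Real.log (1 + (β * P / B) * C p) - (β * P / B) * C p
      + (β * P / B)^2 * C p^2 / 2) / (β * P / B)^2 with hF
  have hmC : AEMeasurable C := hCint.aemeasurable
  -- measurability of F B
  have hFmeas : ∀ B : ℝ, AEStronglyMeasurable (F B) (volume : Measure (ℝ × ℝ)) := by
    intro B
    apply AEMeasurable.aestronglyMeasurable
    exact ((((Real.measurable_log.comp_aemeasurable
      (aemeasurable_const.add (hmC.const_mul _))).sub
      (hmC.const_mul _)).add
      (((hmC.pow_const 2).const_mul _).div_const 2)).div_const _)
  -- DCT: ∫ F B → 0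
  have hDCT : Tendsto (fun B => ∫ p : ℝ × ℝ, F B p) atTop (nhds 0) := by
    have h0 : (0:ℝ) = ∫ _p : ℝ × ℝ, (0:ℝ) := by simp
    rw [h0]
    apply tendsto_integral_filter_of_dominated_convergence (fun p => C p^2/2)
    · exact Eventually.of_forall hFmeas
    · filter_upwards [eventually_gt_atTop (0:ℝ)] with B hB
      apply ae_of_all
      intro p
      have hε : 0 < β * P / B := by positivity
      have hx : 0 ≤ (β * P / B) * C p := mul_nonneg hε.le (hC0 p)
      have h := abs_f_le_sq _ hx
      rw [hF]
      simp only
      rw [Real.norm_eq_abs, abs_div, abs_of_pos (by positivity : (0:ℝ) < (β*P/B)^2)]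
      rw [div_le_div_iff₀ (by positivity) (by norm_num)]
      calc |Real.log (1 + β * P / B * C p) - β * P / B * C p
              + (β * P / B)^2 * C p^2 / 2| * 2
          = |Real.log (1 + β * P / B * C p) - β * P / B * C p
              + (β * P / B * C p)^2 / 2| * 2 := by ring_nf
        _ ≤ ((β * P / B * C p)^2 / 2) * 2 := by
            have := abs_f_le_sq ((β * P / B) * C p) hx
            nlinarith [abs_nonneg (Real.log (1 + β * P / B * C p) - β * P / B * C p
              + (β * P / B * C p)^2 / 2)]
        _ = C p^2 * (β * P / B)^2 := by ring
    · exact hC2int.div_const 2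
    · apply ae_of_all
      intro p
      rcases eq_or_lt_of_le (hC0 p) with hc | hc
      · have : ∀ B : ℝ, F B p = 0 := by
          intro B; rw [hF]; simp [← hc]
        simpa [this] using tendsto_const_nhds
      · -- squeeze: for large B, |F B p| ≤ 2 * C p^3 * β * P / B
        apply squeeze_zero_norm' (a := fun B => (2 * C p^3 * β * P) * B⁻¹)
        · filter_upwards [eventually_gt_atTop (max 1 (2 * β * P * C p))] with B hB
          have hB1 : (1:ℝ) < B := lt_of_le_of_lt (le_max_left _ _) hB
          have hB0 : (0:ℝ) < B := one_pos.trans hB1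
          have hε : 0 < β * P / B := by positivity
          set x := (β * P / B) * C p with hxdef
          have hx0 : 0 < x := mul_pos hε hc
          have hxhalf : x < 1/2 := by
            rw [hxdef, div_mul_eq_mul_div, div_lt_div_iff₀ hB0 (by norm_num)]
            have := lt_of_le_of_lt (le_max_right 1 (2 * β * P * C p)) hB
            nlinarith
          have hcub := abs_f_le_cubic x hx0.le (by linarith)
          have h1x : (1:ℝ)/2 ≤ 1 - x := by linarith
          have hbound : x^3/(1-x) ≤ 2 * x^3 := by
            rw [div_le_iff₀ (by linarith : (0:ℝ) < 1 - x)]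
            nlinarith [pow_pos hx0 3]
          rw [hF]
          simp only
          rw [Real.norm_eq_abs, abs_div, abs_of_pos (by positivity : (0:ℝ) < (β*P/B)^2)]
          rw [div_le_iff₀ (by positivity : (0:ℝ) < (β*P/B)^2)]
          calc |Real.log (1 + β * P / B * C p) - β * P / B * C p
                  + (β * P / B)^2 * C p^2 / 2|
              = |Real.log (1 + x) - x + x^2/2| := by rw [hxdef]; ring_nf
            _ ≤ 2 * x^3 := hcub.trans hbound
            _ = 2 * C p^3 * β * P * B⁻¹ * (β*P/B)^2 := by
                rw [hxdef]; field_simp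
        · have := (tendsto_inv_atTop_zero).const_mul (2 * C p^3 * β * P)
          rwa [mul_zero] at this
  -- now identify B * r B with β P² * ∫ F B for B > 0
  have key : ∀ B : ℝ, 0 < B →
      B * (D B - (P - β * P ^ 2 * σ / (2 * B))) = β * P^2 * ∫ p : ℝ × ℝ, F B p := by
    intro B hB
    have hε : 0 < β * P / B := by positivity
    set ε := β * P / B with hε'
    have hLmeas : AEStronglyMeasurable (fun p => Real.log (1 + ε * C p))
        (volume : Measure (ℝ × ℝ)) :=
      (Real.measurable_log.comp_aemeasurable
        (aemeasurable_const.add (hmC.const_mul _))).aestronglyMeasurable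
    have hLint : Integrable (fun p => Real.log (1 + ε * C p)) := by
      apply Integrable.mono (hCint.const_mul ε) hLmeas
      apply ae_of_all
      intro p
      have hx : 0 ≤ ε * C p := mul_nonneg hε.le (hC0 p)
      have h1 : (0:ℝ) < 1 + ε * C p := by linarith
      have hub : Real.log (1 + ε * C p) ≤ ε * C p := by
        have := Real.log_le_sub_one_of_pos h1; linarith
      rw [Real.norm_eq_abs, Real.norm_eq_abs,
        abs_of_nonneg (Real.log_nonneg (by linarith)), abs_of_nonneg hx]
      exact hub
    have hint2 : Integrable (fun p => ε^2 * C p^2 / 2) :=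
      (hC2int.const_mul (ε^2)).div_const 2
    have hsplit : ∫ p : ℝ × ℝ, F B p
        = ((∫ p : ℝ × ℝ, Real.log (1 + ε * C p)) - ε * 1 + ε^2 * σ / 2) / ε^2 := by
      rw [hF]
      simp only [← hε']
      rw [MeasureTheory.integral_div]
      congr 1
      have hsub : Integrable (fun p : ℝ × ℝ => Real.log (1 + ε * C p) - ε * C p) :=
        hLint.sub (hCint.const_mul ε)
      rw [integral_add hsub hint2, integral_sub hLint (hCint.const_mul ε)]
      rw [MeasureTheory.integral_const_mul, hmass]
      simp_rw [mul_div_assoc (ε^2), MeasureTheory.integral_const_mul,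
        MeasureTheory.integral_div, ← hσ]
    rw [hsplit, hD B hB]
    have hB' : B ≠ 0 := ne_of_gt hB
    have hβ' : β ≠ 0 := ne_of_gt hβ0
    have hP' : P ≠ 0 := ne_of_gt hP
    rw [hε']
    field_simp
    ring
  -- conclude
  have : Tendsto (fun B => β * P^2 * ∫ p : ℝ × ℝ, F B p) atTop (nhds 0) := by
    simpa using hDCT.const_mul (β * P^2)
  apply this.congr'
  filter_upwards [eventually_gt_atTop (0:ℝ)] with B hB
  exact (key B hB).symm
end

section
/- Let (Vₙ) be a sequence of random variables defined by Vₙ = (Sₙ/n)·log(Sₙ/n), where Sₙ = Σ_{i=0}^{n−1} rᵢ and (rᵢ) are i.i.d. nonnegative random variables with E[r₀] = 1 and E[r₀ log r₀] < ∞. Then Vₙ → 0 almost surely and in L¹ as n → ∞. -/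
open MeasureTheory Filter ProbabilityTheory Topology ENNReal

/-- Let `(rᵢ)` be i.i.d. nonnegative random variables with mean `1` and
`E[|r₀ log r₀|] < ∞`, `Sₙ = Σ_{i<n} rᵢ`, and `Vₙ = (Sₙ/n) log(Sₙ/n)`. Then
`Vₙ → 0` almost surely and in `L¹`. -/
theorem stmt_17 {Ω : Type*} [MeasurableSpace Ω] (μ : Measure Ω)
    [IsProbabilityMeasure μ] (r : ℕ → Ω → ℝ)
    (hmeas : ∀ i, Measurable (r i))
    (hindep : iIndepFun r μ)
    (hident : ∀ i, IdentDistrib (r i) (r 0) μ μ)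
    (hnonneg : ∀ i ω, 0 ≤ r i ω)
    (hint : Integrable (r 0) μ)
    (hmean : ∫ ω, r 0 ω ∂μ = 1)
    (hloglint : Integrable (fun ω => |r 0 ω * Real.log (r 0 ω)|) μ)
    (V : ℕ → Ω → ℝ)
    (hV : ∀ n ω, V n ω =
      ((∑ i ∈ Finset.range n, r i ω) / (n : ℝ)) *
        Real.log ((∑ i ∈ Finset.range n, r i ω) / (n : ℝ))) :
    (∀ᵐ ω ∂μ, Tendsto (fun n => V n ω) atTop (nhds 0)) ∧
    Tendsto (fun n => ∫ ω, |V n ω| ∂μ) atTop (nhds 0) := by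
  classical
  set φp : ℝ → ℝ := fun x => max (x * Real.log x) 0 with hφp
  have hφpm : Measurable φp := (measurable_id.mul Real.measurable_log).max measurable_const
  set X : ℕ → Ω → ℝ := fun i ω => φp (r i ω) with hXdef
  have hXmeas : ∀ i, Measurable (X i) := fun i => hφpm.comp (hmeas i)
  have hX0int : Integrable (X 0) μ := by
    refine hloglint.mono' (hXmeas 0).aestronglyMeasurable ?_
    filter_upwards with ω
    rw [Real.norm_eq_abs, abs_of_nonneg (le_max_right _ _)]
    exact max_le (le_abs_self _) (abs_nonneg _)
  have hXident : ∀ i, IdentDistrib (X i) (X 0) μ μ := fun i => (hident i).comp hφpm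
  have hXindep : Pairwise (Function.onFun (IndepFun · · μ) X) :=
    fun i j hij => (hindep.indepFun hij).comp hφpm hφpm
  have hXint : ∀ i, Integrable (X i) μ := fun i => (hXident i).integrable_iff.mpr hX0int
  set c : ℝ := ∫ ω, X 0 ω ∂μ with hc
  have hc0 : 0 ≤ c := integral_nonneg fun ω => le_max_right _ _
  -- strong law for r
  have hslln : ∀ᵐ ω ∂μ, Tendsto (fun n : ℕ => (∑ i ∈ Finset.range n, r i ω) / n) atTop (𝓝 1) := by
    have h := strong_law_ae_real r hint (fun i j hij => hindep.indepFun hij) hident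
    simpa [hmean] using h
  have hAS : ∀ᵐ ω ∂μ, Tendsto (fun n => V n ω) atTop (𝓝 0) := by
    filter_upwards [hslln] with ω hω
    have h2 := (Real.continuous_mul_log.tendsto 1).comp hω
    have he : (fun n : ℕ => V n ω) =
        (fun x : ℝ => x * Real.log x) ∘ (fun n : ℕ => (∑ i ∈ Finset.range n, r i ω) / n) :=
      funext fun n => hV n ω
    rw [he]
    simpa [Real.log_one] using h2
  -- strong law for X
  have hWtend : ∀ᵐ ω ∂μ, Tendsto (fun n : ℕ => (∑ i ∈ Finset.range n, X i ω) / n) atTop (𝓝 c) :=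
    strong_law_ae_real X hX0int hXindep hXident
  -- pointwise bound
  have hWnn : ∀ n ω, 0 ≤ (∑ i ∈ Finset.range n, X i ω) / n := fun n ω =>
    div_nonneg (Finset.sum_nonneg fun i _ => le_max_right _ _) (Nat.cast_nonneg n)
  have hbound : ∀ n ω, |V n ω| ≤ (∑ i ∈ Finset.range n, X i ω) / n + 1 := by
    intro n ω
    rcases Nat.eq_zero_or_pos n with h0 | hn
    · subst h0
      simp [hV 0 ω]
    · have hn' : (0:ℝ) < n := Nat.cast_pos.2 hn
      set t : ℝ := (∑ i ∈ Finset.range n, r i ω) / n with ht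
      have ht0 : 0 ≤ t := div_nonneg (Finset.sum_nonneg fun i _ => hnonneg i ω) (Nat.cast_nonneg n)
      have hup : t * Real.log t ≤ (∑ i ∈ Finset.range n, X i ω) / n := by
        have hjen := Real.convexOn_mul_log.map_sum_le (t := Finset.range n)
            (w := fun _ => (n:ℝ)⁻¹) (p := fun i => r i ω)
            (fun i _ => by positivity)
            (by rw [Finset.sum_const, Finset.card_range, nsmul_eq_mul, mul_inv_cancel₀ hn'.ne'])
            (fun i _ => hnonneg i ω)
        have e1 : (∑ i ∈ Finset.range n, (n:ℝ)⁻¹ • r i ω) = t := by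
          simp only [smul_eq_mul, ht, ← Finset.mul_sum, div_eq_inv_mul]
        rw [e1] at hjen
        refine hjen.trans ?_
        rw [div_eq_inv_mul, Finset.mul_sum]
        exact Finset.sum_le_sum fun i _ => by
          simp only [smul_eq_mul]
          exact mul_le_mul_of_nonneg_left (le_max_left _ _) (by positivity)
      have hlow : t - 1 ≤ t * Real.log t := by
        rcases eq_or_lt_of_le ht0 with h | h
        · simp [← h]
        · have hl := Real.one_sub_inv_le_log_of_pos h
          have := mul_le_mul_of_nonneg_left hl h.le
          have hinv : t * t⁻¹ = 1 := mul_inv_cancel₀ h.ne'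
          nlinarith
      rw [hV]
      rw [abs_le]
      have hW := hWnn n ω
      constructor
      · have h1 : (∑ i ∈ Finset.range n, r i ω) / n = t := rfl
        rw [h1]; linarith
      · have h1 : (∑ i ∈ Finset.range n, r i ω) / n = t := rfl
        rw [h1]; linarith
  -- measurability of V
  have hSmeas : ∀ n, Measurable (fun ω => (∑ i ∈ Finset.range n, r i ω) / (n:ℝ)) := fun n =>
    (Finset.measurable_sum _ fun i _ => hmeas i).div_const _
  have hVmeas : ∀ n, Measurable (V n) := by
    intro n
    have : V n = (fun x : ℝ => x * Real.log x) ∘ (fun ω => (∑ i ∈ Finset.range n, r i ω) / n) :=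
      funext fun ω => hV n ω
    rw [this]
    exact Real.continuous_mul_log.measurable.comp (hSmeas n)
  -- ENNReal setup
  set F : ℕ → Ω → ℝ≥0∞ := fun n ω => ENNReal.ofReal |V n ω| with hF
  set Gn : ℕ → Ω → ℝ≥0∞ :=
    fun n ω => ENNReal.ofReal ((∑ i ∈ Finset.range n, X i ω) / n + 1) with hGn
  set L : ℝ≥0∞ := ENNReal.ofReal (c + 1) with hL
  have hLfin : L ≠ ⊤ := ENNReal.ofReal_ne_top
  have hFmeas : ∀ n, Measurable (F n) := fun n =>
    ENNReal.measurable_ofReal.comp (hVmeas n).abs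
  have hGmeas : ∀ n, Measurable (Gn n) := fun n =>
    ENNReal.measurable_ofReal.comp
      (((Finset.measurable_sum _ fun i _ => hXmeas i).div_const _).add_const 1)
  have hFle : ∀ n ω, F n ω ≤ Gn n ω := fun n ω => ENNReal.ofReal_le_ofReal (hbound n ω)
  -- lintegral of Gn is eventually L
  have hGint : ∀ n, 1 ≤ n → ∫⁻ ω, Gn n ω ∂μ = L := by
    intro n hn
    have hn' : (0:ℝ) < n := Nat.cast_pos.2 hn
    have hintg : Integrable (fun ω => (∑ i ∈ Finset.range n, X i ω) / n + 1) μ :=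
      (((integrable_finset_sum _ fun i _ => hXint i).div_const _).add (integrable_const 1))
    rw [← ofReal_integral_eq_lintegral_ofReal hintg
        (Eventually.of_forall fun ω => by positivity)]
    congr 1
    rw [integral_add ((integrable_finset_sum _ fun i _ => hXint i).div_const _) (integrable_const 1),
      integral_const, integral_div, integral_finset_sum _ fun i _ => hXint i]
    have : ∀ i ∈ Finset.range n, ∫ ω, X i ω ∂μ = c := fun i _ => (hXident i).integral_eq
    rw [Finset.sum_congr rfl this, Finset.sum_const, Finset.card_range, nsmul_eq_mul]
    simp [mul_div_assoc, mul_comm, mul_div_cancel_left₀, hn'.ne']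
  have hGtend : Tendsto (fun n => ∫⁻ ω, Gn n ω ∂μ) atTop (𝓝 L) := by
    refine tendsto_const_nhds.congr' ?_
    filter_upwards [eventually_ge_atTop 1] with n hn
    exact (hGint n hn).symm
  -- a.e. limits in ENNReal
  have hFl : ∀ᵐ ω ∂μ, Tendsto (fun n => F n ω) atTop (𝓝 0) := by
    filter_upwards [hAS] with ω hω
    have h1 : Tendsto (fun n => |V n ω|) atTop (𝓝 (0:ℝ)) := by simpa using hω.abs
    have := (ENNReal.continuous_ofReal.tendsto 0).comp h1
    rw [ENNReal.ofReal_zero] at this; exact this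
  have hGl : ∀ᵐ ω ∂μ, Tendsto (fun n => Gn n ω) atTop (𝓝 L) := by
    filter_upwards [hWtend] with ω hω
    exact (ENNReal.continuous_ofReal.tendsto _).comp (hω.add tendsto_const_nhds)
  -- generalized dominated convergence in ℝ≥0∞
  have key : Tendsto (fun n => ∫⁻ ω, F n ω ∂μ) atTop (𝓝 0) := by
    set a : ℕ → ℝ≥0∞ := fun n => ∫⁻ ω, F n ω ∂μ with ha
    set b : ℕ → ℝ≥0∞ := fun n => ∫⁻ ω, Gn n ω ∂μ with hb
    set cn : ℕ → ℝ≥0∞ := fun n => ∫⁻ ω, (Gn n ω - F n ω) ∂μ with hcn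
    have hsplit : ∀ n, b n = a n + cn n := by
      intro n
      rw [hb, ha, hcn, ← lintegral_add_left (hFmeas n)]
      exact lintegral_congr fun ω => (add_tsub_cancel_of_le (hFle n ω)).symm
    have hclimsup : limsup cn atTop ≤ L := by
      have h1 : ∀ n, cn n ≤ b n := fun n => lintegral_mono fun ω => tsub_le_self
      calc limsup cn atTop ≤ limsup b atTop := limsup_le_limsup (Eventually.of_forall h1)
        _ = L := hGtend.limsup_eq
    have hcliminf : L ≤ liminf cn atTop := by
      have hGF : ∀ᵐ ω ∂μ, Tendsto (fun n => Gn n ω - F n ω) atTop (𝓝 L) := by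
        filter_upwards [hFl, hGl] with ω h1 h2
        simpa using ENNReal.Tendsto.sub h2 h1 (Or.inr (by simp))
      have e1 : ∫⁻ ω, liminf (fun n => Gn n ω - F n ω) atTop ∂μ = L := by
        rw [lintegral_congr_ae (hGF.mono fun ω h => h.liminf_eq)]
        simp
      calc L = ∫⁻ ω, liminf (fun n => Gn n ω - F n ω) atTop ∂μ := e1.symm
        _ ≤ liminf cn atTop := lintegral_liminf_le fun n => (hGmeas n).sub (hFmeas n)
    have hctend : Tendsto cn atTop (𝓝 L) :=
      tendsto_of_le_liminf_of_limsup_le hcliminf hclimsup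
    have hsub : Tendsto (fun n => b n - cn n) atTop (𝓝 0) := by
      have := ENNReal.Tendsto.sub hGtend hctend (Or.inl hLfin)
      simpa using this
    refine hsub.congr' ?_
    have hbfin : ∀ᶠ n in atTop, b n < ⊤ := by
      have : L < ⊤ := hLfin.lt_top
      exact hGtend.eventually_lt_const this
    filter_upwards [hbfin] with n hn
    have hcfin : cn n ≠ ⊤ := by
      have : cn n ≤ b n := lintegral_mono fun ω => tsub_le_self
      exact (this.trans_lt hn).ne
    rw [hsplit n, ENNReal.add_sub_cancel_right hcfin]
  -- conclude
  refine ⟨hAS, ?_⟩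
  have habs : ∀ n, ∫ ω, |V n ω| ∂μ = (∫⁻ ω, F n ω ∂μ).toReal := by
    intro n
    rw [integral_eq_lintegral_of_nonneg_ae (Eventually.of_forall fun ω => abs_nonneg _)
      (hVmeas n).abs.aestronglyMeasurable]
  have he : (fun n => ∫ ω, |V n ω| ∂μ) = fun n => (∫⁻ ω, F n ω ∂μ).toReal := funext habs
  rw [he]
  have := (ENNReal.tendsto_toReal (by simp : (0:ℝ≥0∞) ≠ ⊤)).comp key
  rw [ENNReal.toReal_zero] at this; exact this
end

section
/- For real numbers σ > 0, β ≥ 1, T F-product c > 0, suppose the 'spread' Δ > 0 and signal-to-noise ratio ρ = P/B ≥ 0 satisfy: either (ρ ≤ 1/c and Δ ≤ β/(3c)) or (1/c < ρ < (Δ/β)·(e^{β/(2cΔ)} − 1)). Then (Δ/β)·log(1 + βρ/Δ) ≤ (1/ρ + c)^{−1}. -/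
/-- `2 log v ≤ v - 1/v` for `v ≥ 1`. -/
lemma two_log_le_aux (v : ℝ) (hv : 1 ≤ v) : 2 * Real.log v ≤ v - 1/v := by
  have hasD : ∀ t : ℝ, 0 < t → HasDerivAt (fun t : ℝ => t - 1/t - 2 * Real.log t)
      (1 - (-(t^2)⁻¹) - 2 * t⁻¹) t := by
    intro t ht0
    have := ((hasDerivAt_id' t).sub ((hasDerivAt_inv (ne_of_gt ht0)))).sub
      ((Real.hasDerivAt_log (ne_of_gt ht0)).const_mul 2)
    simpa [one_div, sub_eq_add_neg, Pi.add_def, Pi.neg_def] using this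
  have key : MonotoneOn (fun t : ℝ => t - 1/t - 2 * Real.log t) (Set.Ici 1) := by
    apply monotoneOn_of_deriv_nonneg (convex_Ici 1)
    · apply ContinuousOn.sub
      apply ContinuousOn.sub continuousOn_id
      · exact continuousOn_const.div continuousOn_id (fun t ht => by
          have : (1:ℝ) ≤ t := ht; positivity)
      · exact (continuousOn_const.mul (Real.continuousOn_log.mono (by
          intro t ht; simp only [Set.mem_compl_iff, Set.mem_singleton_iff]
          have : (1:ℝ) ≤ t := ht; positivity)))
    · intro t ht
      rw [interior_Ici] at ht
      have ht0 : (0:ℝ) < t := lt_trans one_pos ht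
      exact ((hasD t ht0).differentiableAt).differentiableWithinAt
    · intro t ht
      rw [interior_Ici] at ht
      have ht0 : (0:ℝ) < t := lt_trans one_pos ht
      rw [(hasD t ht0).deriv]
      have : 1 - (-(t^2)⁻¹) - 2 * t⁻¹ = (1 - t⁻¹)^2 := by
        field_simp; ring
      rw [this]; positivity
  have h := key (Set.self_mem_Ici) (show v ∈ Set.Ici 1 from hv) hv
  simp only [Real.log_one] at h
  rw [one_div]
  norm_num at h
  linarith

/-- Sufficient condition for the optimal power-sharing parameter to equal one:
for `σ > 0`, `β ≥ 1`, `c > 0`, spread `Δ > 0` and SNR `ρ ≥ 0`, if either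
`ρ ≤ 1/c` and `Δ ≤ β/(3c)`, or `1/c < ρ < (Δ/β)(e^{β/(2cΔ)} - 1)`, then
`(Δ/β)·log(1 + βρ/Δ) ≤ (1/ρ + c)⁻¹`. -/
theorem stmt_19 (σ β c Δ ρ : ℝ) (hσ : 0 < σ) (hβ : 1 ≤ β) (hc : 0 < c)
    (hΔ : 0 < Δ) (hρ : 0 ≤ ρ)
    (hcase : (ρ ≤ 1/c ∧ Δ ≤ β/(3*c)) ∨
      (1/c < ρ ∧ ρ < (Δ/β) * (Real.exp (β/(2*c*Δ)) - 1))) :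
    (Δ/β) * Real.log (1 + β*ρ/Δ) ≤ (1/ρ + c)⁻¹ := by
  have hβ0 : (0:ℝ) < β := lt_of_lt_of_le one_pos hβ
  rcases hcase with ⟨h1, h2⟩ | ⟨h1, h2⟩
  · rcases eq_or_lt_of_le hρ with h0 | h0
    · rw [← h0]
      simp
      positivity
    -- ρ > 0
    have hrhs : (1/ρ + c)⁻¹ = ρ / (1 + c*ρ) := by
      field_simp
    rw [hrhs]
    have haux : 3*c ≤ β/Δ := by
      rw [le_div_iff₀ hΔ]
      calc 3*c*Δ ≤ 3*c*(β/(3*c)) := by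
            apply mul_le_mul_of_nonneg_left h2; positivity
        _ = β := by field_simp
    have hcρ : c*ρ ≤ 1 := by
      rw [div_eq_mul_inv, one_mul] at h1
      calc c*ρ ≤ c*c⁻¹ := mul_le_mul_of_nonneg_left h1 (le_of_lt hc)
        _ = 1 := mul_inv_cancel₀ (ne_of_gt hc)
    have hq : 0 ≤ β*ρ/Δ := by positivity
    have hu1 : 1 ≤ 1 + β*ρ/Δ := by linarith
    have hu0 : (0:ℝ) < 1 + β*ρ/Δ := by linarith
    have husq : (1 + c*ρ)^2 ≤ 1 + β*ρ/Δ := by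
      have hr1 : 3*c*ρ ≤ (β/Δ)*ρ := mul_le_mul_of_nonneg_right haux hρ
      have hr2 : (β/Δ)*ρ = β*ρ/Δ := by ring
      nlinarith [mul_le_mul_of_nonneg_right hcρ (mul_nonneg hc.le hρ)]
    have hsqrt : 1 + c*ρ ≤ Real.sqrt (1 + β*ρ/Δ) := by
      rw [show (1 + c*ρ) = Real.sqrt ((1+c*ρ)^2) from
        (Real.sqrt_sq (by positivity)).symm]
      exact Real.sqrt_le_sqrt husq
    have hsv : 1 ≤ Real.sqrt (1 + β*ρ/Δ) :=
      le_trans (by nlinarith [mul_nonneg hc.le hρ]) hsqrt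
    have hsv0 : (0:ℝ) < Real.sqrt (1 + β*ρ/Δ) := lt_of_lt_of_le one_pos hsv
    have hss : Real.sqrt (1 + β*ρ/Δ) * Real.sqrt (1 + β*ρ/Δ) = 1 + β*ρ/Δ :=
      Real.mul_self_sqrt hu0.le
    have hlog : Real.log (1 + β*ρ/Δ) ≤ (β*ρ/Δ) / Real.sqrt (1 + β*ρ/Δ) := by
      have h2l := two_log_le_aux (Real.sqrt (1 + β*ρ/Δ)) hsv
      have hls : Real.log (1 + β*ρ/Δ) = 2 * Real.log (Real.sqrt (1 + β*ρ/Δ)) := by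
        rw [Real.log_sqrt hu0.le]; ring
      rw [hls]
      have heq : Real.sqrt (1 + β*ρ/Δ) - 1/Real.sqrt (1 + β*ρ/Δ)
          = (β*ρ/Δ)/Real.sqrt (1 + β*ρ/Δ) := by
        rw [eq_div_iff (ne_of_gt hsv0), sub_mul, one_div, inv_mul_cancel₀ hsv0.ne', hss]
        ring
      linarith [h2l, heq.ge, heq.le]
    have hlog2 : Real.log (1 + β*ρ/Δ) ≤ (β*ρ/Δ) / (1 + c*ρ) := by
      apply le_trans hlog
      exact div_le_div_of_nonneg_left hq (by positivity) hsqrt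
    calc (Δ/β) * Real.log (1 + β*ρ/Δ) ≤ (Δ/β) * ((β*ρ/Δ)/(1 + c*ρ)) := by
          apply mul_le_mul_of_nonneg_left hlog2; positivity
      _ = ρ / (1 + c*ρ) := by
          field_simp
  · -- case 2
    have hρ0 : 0 < ρ := lt_trans (by positivity) h1
    have h2' : β*ρ/Δ < Real.exp (β/(2*c*Δ)) - 1 := by
      have h := mul_lt_mul_of_pos_left h2 (show (0:ℝ) < β/Δ by positivity)
      calc β*ρ/Δ = (β/Δ)*ρ := by ring
        _ < (β/Δ)*((Δ/β)*(Real.exp (β/(2*c*Δ)) - 1)) := h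
        _ = Real.exp (β/(2*c*Δ)) - 1 := by field_simp
    have hlogb : Real.log (1 + β*ρ/Δ) < β/(2*c*Δ) := by
      have hlt := Real.log_lt_log (show (0:ℝ) < 1 + β*ρ/Δ by positivity)
        (show 1 + β*ρ/Δ < Real.exp (β/(2*c*Δ)) by linarith)
      rwa [Real.log_exp] at hlt
    have hL : (Δ/β) * Real.log (1 + β*ρ/Δ) < 1/(2*c) := by
      calc (Δ/β) * Real.log (1 + β*ρ/Δ) < (Δ/β) * (β/(2*c*Δ)) := by
            apply mul_lt_mul_of_pos_left hlogb; positivity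
        _ = 1/(2*c) := by field_simp
    have hR : 1/(2*c) ≤ (1/ρ + c)⁻¹ := by
      rw [one_div, inv_le_inv₀ (by positivity) (by positivity)]
      have : 1/ρ < c := by
        rw [div_lt_iff₀ hρ0]
        rw [div_lt_iff₀ hc] at h1
        linarith [mul_comm c ρ]
      linarith
    linarith
end
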